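/- arXiv:1805.03701 — 3 statements merged into one kernel-verified Lean document; each statement's English description precedes it below -/
import Mathlib

section
/- Let 0 < θ₁ < θ₂ < π/2, and fix the coordinate quadrant structure on ℝ². For any two nonzero vectors f₁, f₂ ∈ ℝ² not lying on the coordinate axes, there exists k ∈ ℕ such that R(kθ₁)f₁ and R(kθ₂)f₂ lie in the same open quadrant or in diametrically opposite open quadrants. -/
open Real
open Finset

/-- `z` and `w` lie in the same open quadrant of `ℝ² ≃ ℂ` or in diametrically
opposite ones. -/
def SameOrOppositeQuadrant (z w : ℂ) : Prop :=
  (0 < z.re * w.re ∧ 0 < z.im * w.im) ∨ (z.re * w.re < 0 ∧ z.im * w.im < 0)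


noncomputable def ee (t : ℝ) : ℂ := Complex.exp (t * Complex.I)

lemma abs_ee (t : ℝ) : ‖ee t‖ = 1 := Complex.norm_exp_ofReal_mul_I t

lemma ee_mul (s t : ℝ) : ee s * ee t = ee (s + t) := by
  rw [ee, ee, ee, ← Complex.exp_add]; congr 1; push_cast; ring

lemma ee_conj (t : ℝ) : (starRingEnd ℂ) (ee t) = ee (-t) := by
  rw [ee, ee, ← Complex.exp_conj]; congr 1; simp [map_mul, Complex.conj_I]

lemma ee_pow_mul (s t : ℝ) (k : ℕ) : (ee s)^k * (ee t)^k = (ee (s + t))^k := by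
  rw [← mul_pow, ee_mul]

lemma ee_ne_one {t : ℝ} (h0 : t ≠ 0) (h2 : |t| < 2 * π) : ee t ≠ 1 := by
  intro h
  rw [ee, Complex.exp_eq_one_iff] at h
  obtain ⟨n, hn⟩ := h
  have him : t = (n : ℝ) * (2 * π) := by
    have := congrArg Complex.im hn
    simpa using this
  have hπ : (0:ℝ) < 2 * π := by positivity
  have h1 : |(n:ℝ)| < 1 := by
    have : |(n:ℝ)| * (2 * π) < 1 * (2 * π) := by
      rw [one_mul]
      calc |(n:ℝ)| * (2*π) = |(n:ℝ) * (2*π)| := by rw [abs_mul, abs_of_pos hπ]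
        _ = |t| := by rw [him]
        _ < 2*π := h2
    exact lt_of_mul_lt_mul_right this (le_of_lt hπ)
  have : n = 0 := by
    obtain ⟨ha, hb⟩ := abs_lt.mp h1
    have ha' : (-1 : ℤ) < n := by exact_mod_cast ha
    have hb' : n < 1 := by exact_mod_cast hb
    omega
  rw [this] at him
  simp at him
  exact h0 him

lemma sum_pow_bound {ζ : ℂ} (h1 : ‖ζ‖ = 1) (hζ : ζ ≠ 1) (N : ℕ) :
    ‖∑ k ∈ range N, ζ^k‖ ≤ 2 / ‖ζ - 1‖ := by
  rw [geom_sum_eq hζ, norm_div]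
  have hd : 0 < ‖ζ - 1‖ := by
    exact norm_pos_iff.mpr (sub_ne_zero.mpr hζ)
  have hnum : ‖ζ^N - 1‖ ≤ 2 := by
    calc ‖ζ^N - 1‖ ≤ ‖ζ^N‖ + ‖(1:ℂ)‖ := by
          simpa using norm_sub_le (ζ^N) (1 : ℂ)
      _ = 2 := by rw [norm_pow, h1, one_pow, norm_one]; norm_num
  exact (div_le_div_iff_of_pos_right hd).mpr hnum

lemma re_osc_bound (c : ℂ) {ζ : ℂ} (h1 : ‖ζ‖ = 1) (hζ : ζ ≠ 1) (N : ℕ) :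
    |∑ k ∈ range N, (c * ζ^k).re| ≤ 2 * ‖c‖ / ‖ζ - 1‖ := by
  have : ∑ k ∈ range N, (c * ζ^k).re = (c * ∑ k ∈ range N, ζ^k).re := by
    rw [Finset.mul_sum, Complex.re_sum]
  rw [this]
  calc |(c * ∑ k ∈ range N, ζ^k).re| ≤ ‖c * ∑ k ∈ range N, ζ^k‖ :=
        Complex.abs_re_le_norm _
    _ = ‖c‖ * ‖∑ k ∈ range N, ζ^k‖ := norm_mul _ _
    _ ≤ ‖c‖ * (2 / ‖ζ - 1‖) :=
        mul_le_mul_of_nonneg_left (sum_pow_bound h1 hζ N) (norm_nonneg c)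
    _ = 2 * ‖c‖ / ‖ζ - 1‖ := by ring

lemma imim (z w : ℂ) : z.im * w.im = ((z * (starRingEnd ℂ) w).re - (z*w).re)/2 := by
  simp [Complex.mul_re, Complex.conj_re, Complex.conj_im]

lemma rere (z w : ℂ) : z.re * w.re = ((z*w).re + (z * (starRingEnd ℂ) w).re)/2 := by
  simp [Complex.mul_re, Complex.conj_re, Complex.conj_im]

lemma imsq (z : ℂ) : z.im^2 = (Complex.normSq z - (z*z).re)/2 := by
  simp [Complex.normSq_apply, Complex.mul_re]
  ring

lemma key (φ₁ φ₂ : ℝ) (h01 : 0 < φ₁) (h12 : φ₁ < φ₂) (h2π : φ₂ < π)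
    (A B : ℂ) (hA : A ≠ 0) (hB : B ≠ 0) :
    ∃ k : ℕ, 0 < (A * (ee φ₁)^k).im * (B * (ee φ₂)^k).im := by
  by_contra hcon
  push_neg at hcon
  have hπ : (0:ℝ) < π := Real.pi_pos
  set cB := (starRingEnd ℂ) B with hcB
  -- units not equal to 1
  have hu1 : ee (φ₁ - φ₂) ≠ 1 :=
    ee_ne_one (by linarith) (by rw [abs_of_neg (by linarith)]; linarith)
  have hu2 : ee (φ₁ + φ₂) ≠ 1 :=
    ee_ne_one (by linarith) (by rw [abs_of_pos (by linarith)]; linarith)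
  have hu3 : ee (2*φ₁) ≠ 1 :=
    ee_ne_one (by linarith) (by rw [abs_of_pos (by linarith)]; linarith)
  have hu4 : ee (2*φ₂) ≠ 1 :=
    ee_ne_one (by linarith) (by rw [abs_of_pos (by linarith)]; linarith)
  have hu5 : ee (2*φ₁ - 2*φ₂) ≠ 1 :=
    ee_ne_one (by linarith) (by rw [abs_of_neg (by linarith)]; linarith)
  set nA := Complex.normSq A with hnA
  set nB := Complex.normSq B with hnB
  have hnApos : 0 < nA := Complex.normSq_pos.mpr hA
  have hnBpos : 0 < nB := Complex.normSq_pos.mpr hB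
  set g : ℕ → ℝ := fun k => (A * (ee φ₁)^k).im * (B * (ee φ₂)^k).im with hgdef
  have hgle : ∀ k, g k ≤ 0 := hcon
  -- identity 1
  have hid1 : ∀ k, g k = ((A * cB) * (ee (φ₁ - φ₂))^k).re/2
      - ((A*B) * (ee (φ₁+φ₂))^k).re/2 := by
    intro k
    have e1 : (A * (ee φ₁)^k) * (starRingEnd ℂ) (B * (ee φ₂)^k)
        = (A * cB) * (ee (φ₁ - φ₂))^k := by
      rw [map_mul, map_pow, ee_conj, hcB]
      rw [show φ₁ - φ₂ = φ₁ + (-φ₂) by ring, ← ee_pow_mul]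
      ring
    have e2 : (A * (ee φ₁)^k) * (B * (ee φ₂)^k) = (A*B) * (ee (φ₁+φ₂))^k := by
      rw [← ee_pow_mul]; ring
    show (A * (ee φ₁)^k).im * (B * (ee φ₂)^k).im = _
    rw [imim, e1, e2]
    ring
  -- bound on |∑ g|
  set K1 : ℝ := 2 * ‖A*cB‖ / ‖ee (φ₁-φ₂) - 1‖ / 2
      + 2 * ‖A*B‖ / ‖ee (φ₁+φ₂) - 1‖ / 2 with hK1
  have hSg : ∀ N : ℕ, |∑ k ∈ range N, g k| ≤ K1 := by
    intro N
    have hsplit : ∑ k ∈ range N, g k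
        = (∑ k ∈ range N, ((A*cB) * (ee (φ₁-φ₂))^k).re)/2
          - (∑ k ∈ range N, ((A*B) * (ee (φ₁+φ₂))^k).re)/2 := by
      rw [Finset.sum_div, Finset.sum_div, ← Finset.sum_sub_distrib]
      exact Finset.sum_congr rfl fun k _ => hid1 k
    rw [hsplit]
    have b1 := re_osc_bound (A*cB) (abs_ee (φ₁-φ₂)) hu1 N
    have b2 := re_osc_bound (A*B) (abs_ee (φ₁+φ₂)) hu2 N
    set X := ∑ k ∈ range N, ((A*cB) * (ee (φ₁-φ₂))^k).re
    set Y := ∑ k ∈ range N, ((A*B) * (ee (φ₁+φ₂))^k).re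
    have tri : |X/2 - Y/2| ≤ |X|/2 + |Y|/2 := by
      calc |X/2 - Y/2| = |X/2 + (-(Y/2))| := by ring_nf
        _ ≤ |X/2| + |-(Y/2)| := abs_add_le _ _
        _ = |X|/2 + |Y|/2 := by rw [abs_neg, abs_div, abs_div]; norm_num
    rw [hK1]
    linarith [tri, b1, b2]
  -- squares
  set x : ℕ → ℝ := fun k => (A^2 * (ee (2*φ₁))^k).re with hx
  set y : ℕ → ℝ := fun k => (B^2 * (ee (2*φ₂))^k).re with hy
  set p : ℕ → ℝ := fun k => ((A*B)^2 * (ee (2*φ₁+2*φ₂))^k).re with hp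
  set q : ℕ → ℝ := fun k => ((A*cB)^2 * (ee (2*φ₁-2*φ₂))^k).re with hq
  have hid2 : ∀ k, (g k)^2 = nA*nB/4 - nA/4 * y k - nB/4 * x k + p k/8 + q k/8 := by
    intro k
    have hZZ : (A * (ee φ₁)^k) * (A * (ee φ₁)^k) = A^2 * (ee (2*φ₁))^k := by
      rw [show (2:ℝ)*φ₁ = φ₁ + φ₁ by ring, ← ee_pow_mul]; ring
    have hWW : (B * (ee φ₂)^k) * (B * (ee φ₂)^k) = B^2 * (ee (2*φ₂))^k := by
      rw [show (2:ℝ)*φ₂ = φ₂ + φ₂ by ring, ← ee_pow_mul]; ring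
    have hzn : Complex.normSq (A * (ee φ₁)^k) = nA := by
      rw [map_mul, map_pow]
      rw [show Complex.normSq (ee φ₁) = 1 by rw [← Complex.sq_norm, abs_ee]; norm_num]
      simp [hnA]
    have hwn : Complex.normSq (B * (ee φ₂)^k) = nB := by
      rw [map_mul, map_pow]
      rw [show Complex.normSq (ee φ₂) = 1 by rw [← Complex.sq_norm, abs_ee]; norm_num]
      simp [hnB]
    have h1 : (A * (ee φ₁)^k).im^2 = (nA - x k)/2 := by
      rw [imsq, hZZ, hzn]
    have h2 : (B * (ee φ₂)^k).im^2 = (nB - y k)/2 := by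
      rw [imsq, hWW, hwn]
    have e3 : (A^2 * (ee (2*φ₁))^k) * (B^2 * (ee (2*φ₂))^k)
        = (A*B)^2 * (ee (2*φ₁+2*φ₂))^k := by
      rw [← ee_pow_mul]; ring
    have e4 : (A^2 * (ee (2*φ₁))^k) * (starRingEnd ℂ) (B^2 * (ee (2*φ₂))^k)
        = (A*cB)^2 * (ee (2*φ₁-2*φ₂))^k := by
      rw [map_mul, map_pow, map_pow, ee_conj, hcB,
        show 2*φ₁ - 2*φ₂ = 2*φ₁ + -(2*φ₂) by ring, ← ee_pow_mul]
      ring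
    have h3 : x k * y k = (p k + q k)/2 := by
      simp only [hx, hy, hp, hq]
      rw [rere, e3, e4]
    have hgk : (g k)^2 = ((nA - x k)/2) * ((nB - y k)/2) := by
      simp only [hgdef]
      rw [mul_pow, h1, h2]
    rw [hgk]
    linear_combination h3/4
  have habs_p : ∀ k, |p k| ≤ nA*nB := by
    intro k
    simp only [hp]
    calc |((A*B)^2 * (ee (2*φ₁+2*φ₂))^k).re|
        ≤ ‖(A*B)^2 * (ee (2*φ₁+2*φ₂))^k‖ := Complex.abs_re_le_norm _
      _ = nA*nB := by
          rw [norm_mul, norm_pow, norm_pow, abs_ee, one_pow, mul_one, norm_mul,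
            hnA, hnB, ← Complex.sq_norm, ← Complex.sq_norm]
          ring
  have hlow : ∀ k, nA*nB/8 - nA/4 * y k - nB/4 * x k + q k/8 ≤ (g k)^2 := by
    intro k
    have h := hid2 k
    have hpk := (abs_le.mp (habs_p k)).1
    linarith
  set Kx : ℝ := 2 * ‖A^2‖ / ‖ee (2*φ₁) - 1‖ with hKx
  set Ky : ℝ := 2 * ‖B^2‖ / ‖ee (2*φ₂) - 1‖ with hKy
  set Kq : ℝ := 2 * ‖(A*cB)^2‖ / ‖ee (2*φ₁-2*φ₂) - 1‖ with hKq
  have hbx : ∀ N : ℕ, |∑ k ∈ range N, x k| ≤ Kx := fun N => by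
    simpa only [hx, hKx] using re_osc_bound (A^2) (abs_ee (2*φ₁)) hu3 N
  have hby : ∀ N : ℕ, |∑ k ∈ range N, y k| ≤ Ky := fun N => by
    simpa only [hy, hKy] using re_osc_bound (B^2) (abs_ee (2*φ₂)) hu4 N
  have hbq : ∀ N : ℕ, |∑ k ∈ range N, q k| ≤ Kq := fun N => by
    simpa only [hq, hKq] using re_osc_bound ((A*cB)^2) (abs_ee (2*φ₁-2*φ₂)) hu5 N
  set M : ℝ := ‖A‖ * ‖B‖ with hM
  have hgabs : ∀ k, |g k| ≤ M := by
    intro k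
    simp only [hgdef]
    rw [abs_mul]
    have ha1 : |(A * (ee φ₁)^k).im| ≤ ‖A‖ := by
      calc |(A * (ee φ₁)^k).im| ≤ ‖A * (ee φ₁)^k‖ := Complex.abs_im_le_norm _
        _ = ‖A‖ := by rw [norm_mul, norm_pow, abs_ee, one_pow, mul_one]
    have ha2 : |(B * (ee φ₂)^k).im| ≤ ‖B‖ := by
      calc |(B * (ee φ₂)^k).im| ≤ ‖B * (ee φ₂)^k‖ := Complex.abs_im_le_norm _
        _ = ‖B‖ := by rw [norm_mul, norm_pow, abs_ee, one_pow, mul_one]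
    exact mul_le_mul ha1 ha2 (abs_nonneg _) (norm_nonneg _)
  have hMnn : 0 ≤ M := mul_nonneg (norm_nonneg _) (norm_nonneg _)
  have hup : ∀ N : ℕ, ∑ k ∈ range N, (g k)^2 ≤ M * K1 := by
    intro N
    have pt : ∀ k ∈ range N, (g k)^2 ≤ M * (-(g k)) := by
      intro k _
      have hb1 := (abs_le.mp (hgabs k)).1
      have hb2 := hgle k
      nlinarith
    calc ∑ k ∈ range N, (g k)^2 ≤ ∑ k ∈ range N, M * (-(g k)) := Finset.sum_le_sum pt
      _ = M * (-(∑ k ∈ range N, g k)) := by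
          rw [← Finset.mul_sum, ← Finset.sum_neg_distrib]
      _ ≤ M * K1 := by
          have hs := (abs_le.mp (hSg N)).1
          exact mul_le_mul_of_nonneg_left (by linarith) hMnn
  have hsum_low : ∀ N : ℕ, (N:ℝ) * (nA*nB)/8 - nA/4 * (∑ k ∈ range N, y k)
      - nB/4 * (∑ k ∈ range N, x k) + (∑ k ∈ range N, q k)/8
      ≤ ∑ k ∈ range N, (g k)^2 := by
    intro N
    have h := Finset.sum_le_sum (fun k (_ : k ∈ range N) => hlow k)
    have expand : ∑ k ∈ range N, (nA*nB/8 - nA/4 * y k - nB/4 * x k + q k/8)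
        = (N:ℝ)*(nA*nB)/8 - nA/4 * (∑ k ∈ range N, y k)
          - nB/4 * (∑ k ∈ range N, x k) + (∑ k ∈ range N, q k)/8 := by
      rw [Finset.sum_add_distrib, Finset.sum_sub_distrib, Finset.sum_sub_distrib,
        Finset.sum_const, Finset.card_range, nsmul_eq_mul,
        ← Finset.mul_sum, ← Finset.mul_sum, ← Finset.sum_div]
      ring
    linarith [h, expand.symm.le, expand.le]
  obtain ⟨N, hN⟩ := exists_nat_gt ((M*K1 + nA/4 * Ky + nB/4 * Kx + Kq/8) * 8 / (nA*nB))
  have h1 := hsum_low N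
  have h2 := hup N
  have hbxN := abs_le.mp (hbx N)
  have hbyN := abs_le.mp (hby N)
  have hbqN := abs_le.mp (hbq N)
  have hm : 0 < nA*nB := mul_pos hnApos hnBpos
  rw [div_lt_iff₀ hm] at hN
  have t1 : 0 ≤ nA * (Ky - ∑ k ∈ range N, y k) :=
    mul_nonneg hnApos.le (by linarith [hbyN.2])
  have t2 : 0 ≤ nB * (Kx - ∑ k ∈ range N, x k) :=
    mul_nonneg hnBpos.le (by linarith [hbxN.2])
  clear_value nA nB M K1 Kx Ky Kq x y p q g cB
  linarith [h1, h2, hN, t1, t2, hbqN.1]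


lemma ee_pow (t : ℝ) (k : ℕ) : (ee t)^k = ee ((k:ℝ) * t) := by
  rw [ee, ee, ← Complex.exp_nat_mul]
  congr 1
  push_cast
  ring


lemma pos_to_same (z w : ℂ) (h : 0 < (z.re*z.im)*(w.re*w.im)) :
    SameOrOppositeQuadrant z w := by
  have key : (z.re*w.re) * (z.im*w.im) = (z.re*z.im)*(w.re*w.im) := by ring
  rcases lt_trichotomy (z.re*w.re) 0 with h'|h'|h'
  · right
    refine ⟨h', ?_⟩
    nlinarith
  · exfalso
    rw [← key, h', zero_mul] at h
    exact lt_irrefl _ h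
  · left
    refine ⟨h', ?_⟩
    nlinarith


/-- Overtaking Lemma 4.3, first case: for `0 < θ₁ < θ₂ < π/2` and nonzero vectors
`f₁, f₂` off the coordinate axes, some simultaneous rotation `R(kθ₁)f₁`, `R(kθ₂)f₂`
puts them in the same open quadrant or in diametrically opposite ones. -/
theorem stmt8 (θ₁ θ₂ : ℝ) (h1 : 0 < θ₁) (h2 : θ₁ < θ₂) (h3 : θ₂ < π / 2)
    (f₁ f₂ : ℂ) (hf₁ : f₁.re ≠ 0 ∧ f₁.im ≠ 0) (hf₂ : f₂.re ≠ 0 ∧ f₂.im ≠ 0) :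
    ∃ k : ℕ, SameOrOppositeQuadrant (Complex.exp ((k : ℝ) * θ₁ * Complex.I) * f₁)
      (Complex.exp ((k : ℝ) * θ₂ * Complex.I) * f₂) := by
  have hne1 : f₁ ≠ 0 := fun h => hf₁.1 (by rw [h]; simp)
  have hne2 : f₂ ≠ 0 := fun h => hf₂.1 (by rw [h]; simp)
  obtain ⟨k, hk⟩ := key (2*θ₁) (2*θ₂) (by linarith) (by linarith) (by linarith)
    (f₁^2) (f₂^2) (pow_ne_zero _ hne1) (pow_ne_zero _ hne2)
  refine ⟨k, pos_to_same _ _ ?_⟩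
  have hsq : ∀ (θ : ℝ) (f : ℂ),
      (Complex.exp ((k : ℝ) * θ * Complex.I) * f) * (Complex.exp ((k : ℝ) * θ * Complex.I) * f)
        = f^2 * (ee (2*θ))^k := by
    intro θ f
    have hze : Complex.exp ((k : ℝ) * θ * Complex.I) = ee ((k:ℝ) * θ) := by
      rw [ee]
      congr 1
      push_cast
      ring
    rw [hze, ee_pow, show (k:ℝ)*(2*θ) = (k:ℝ)*θ + (k:ℝ)*θ by ring, ← ee_mul]
    ring
  have him : ∀ (θ : ℝ) (f : ℂ),
      (f^2 * (ee (2*θ))^k).im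
        = 2 * (Complex.exp ((k : ℝ) * θ * Complex.I) * f).re
            * (Complex.exp ((k : ℝ) * θ * Complex.I) * f).im := by
    intro θ f
    rw [← hsq θ f, Complex.mul_im]
    ring
  rw [him θ₁ f₁, him θ₂ f₂] at hk
  nlinarith [hk]
end

section
/- Let π/2 < θ₁ < θ₂ < π. For any two nonzero vectors f₁, f₂ ∈ ℝ² not lying on the coordinate axes, there exists k ∈ ℕ such that R(kθ₁)f₁ and R(kθ₂)f₂ lie in the same open quadrant or in diametrically opposite open quadrants. -/
open Real

open Finset Filter


-- distance to nearest integer helpers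
lemma dZ_sub_le (x y : ℝ) : |x - y - round (x - y)| ≤ |x - round x| + |y - round y| := by
  calc |x - y - round (x - y)| ≤ |x - y - ((round x - round y : ℤ) : ℝ)| := round_le _ _
    _ = |(x - round x) - (y - round y)| := by push_cast; ring_nf
    _ ≤ |x - round x| + |y - round y| := abs_sub _ _

lemma sin_lower (x : ℝ) : 2 * |x - round x| ≤ |Real.sin (π * x)| := by
  have hr : |x - (round x : ℝ)| ≤ 1/2 := abs_sub_round x
  have h1 : Real.sin (π * x) = (-1)^(round x) * Real.sin (π * (x - round x)) := by
    rw [← Real.sin_add_int_mul_pi (π * (x - round x)) (round x)]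
    ring_nf
  have h2 : |Real.sin (π * x)| = |Real.sin (π * (x - round x))| := by
    have : |((-1:ℝ)) ^ round x| = 1 := by
      rcases Int.even_or_odd (round x) with he | ho
      · rw [he.neg_one_zpow]; norm_num
      · rw [ho.neg_one_zpow]; norm_num
    rw [h1, abs_mul, this, one_mul]
  rw [h2]
  have h3 : |Real.sin (π * (x - round x))| = Real.sin (π * |x - (round x:ℝ)|) := by
    rcases le_or_gt 0 (x - round x) with h | h
    · rw [abs_of_nonneg h, abs_of_nonneg]
      exact Real.sin_nonneg_of_nonneg_of_le_pi (by positivity)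
        (by nlinarith [Real.pi_pos, abs_of_nonneg h ▸ hr])
    · have he : Real.sin (π * (x - round x)) = -Real.sin (π * -(x - round x)) := by
        rw [mul_neg, Real.sin_neg, neg_neg]
      rw [abs_of_neg h, he, abs_neg, abs_of_nonneg]
      exact Real.sin_nonneg_of_nonneg_of_le_pi (by nlinarith [Real.pi_pos])
        (by nlinarith [Real.pi_pos, abs_of_neg h ▸ hr])
  rw [h3]
  have h4 := Real.mul_le_sin (x := π * |x - (round x:ℝ)|) (by positivity)
    (by nlinarith [Real.pi_pos])
  calc 2 * |x - (round x:ℝ)| = 2/π * (π * |x - (round x:ℝ)|) := by field_simp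
    _ ≤ _ := h4


lemma cos_sum_bound (x a : ℝ) (h : Complex.exp (a * Complex.I) ≠ 1) (N : ℕ) :
    |∑ k ∈ Finset.range N, Real.cos (x + k * a)| ≤
      2 / ‖Complex.exp (a * Complex.I) - 1‖ := by
  set z := Complex.exp (a * Complex.I) with hz
  have hzabs : ‖z‖ = 1 := Complex.norm_exp_ofReal_mul_I a
  have hz1 : z - 1 ≠ 0 := sub_ne_zero.mpr h
  have hzpos : 0 < ‖z - 1‖ := by
    simpa [norm_pos_iff] using hz1
  have hterm : ∀ k : ℕ, Real.cos (x + k * a) = (Complex.exp (x * Complex.I) * z ^ k).re := by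
    intro k
    have : Complex.exp (x * Complex.I) * z ^ k = Complex.exp (((x + k * a : ℝ)) * Complex.I) := by
      rw [hz, ← Complex.exp_nat_mul, ← Complex.exp_add]
      congr 1
      push_cast
      ring
    rw [this, Complex.exp_ofReal_mul_I_re]
  calc |∑ k ∈ Finset.range N, Real.cos (x + k * a)|
      = |(Complex.exp (x * Complex.I) * ∑ k ∈ Finset.range N, z ^ k).re| := by
        rw [Finset.mul_sum, Complex.re_sum]
        congr 1
        exact Finset.sum_congr rfl fun k _ => hterm k
    _ ≤ ‖Complex.exp (x * Complex.I) * ∑ k ∈ Finset.range N, z ^ k‖ :=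
        Complex.abs_re_le_norm _
    _ = ‖(z ^ N - 1) / (z - 1)‖ := by
        rw [geom_sum_eq h, norm_mul, Complex.norm_exp_ofReal_mul_I, one_mul]
    _ ≤ 2 / ‖z - 1‖ := by
        rw [norm_div]
        apply (div_le_div_iff_of_pos_right hzpos).mpr
        calc ‖z ^ N - 1‖ ≤ ‖z ^ N‖ + ‖(-1 : ℂ)‖ :=
              by simpa [sub_eq_add_neg] using norm_add_le (z ^ N) (-1)
          _ = 2 := by rw [norm_pow, hzabs, one_pow, norm_neg, norm_one]; norm_num

lemma not_int_of_mem_Ioo {u : ℝ} (h0 : 0 < u) (h1 : u < 1) (n : ℤ) : u ≠ n := by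
  rintro rfl
  have h0' : 0 < n := by exact_mod_cast h0
  have h1' : n < 1 := by exact_mod_cast h1
  omega

lemma exp_ne_one {a : ℝ} (ha : 0 < a) (ha2 : a < 2 * π) :
    Complex.exp ((-a : ℝ) * Complex.I) ≠ 1 := by
  intro hE
  rw [Complex.exp_eq_one_iff] at hE
  obtain ⟨n, hn⟩ := hE
  have h2 : (-a : ℝ) = n * (2 * π) := by
    have := congrArg Complex.im hn
    simpa using this
  have hn0 : n < 0 := by
    by_contra hge
    push_neg at hge
    have : (0:ℝ) ≤ (n:ℝ) * (2*π) := by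
      have : (0:ℝ) ≤ (n:ℝ) := by exact_mod_cast hge
      positivity
    linarith
  have : (n:ℝ) ≤ -1 := by exact_mod_cast (show n ≤ -1 by omega)
  nlinarith [Real.pi_pos]

lemma key_s9 (b₁ b₂ s t : ℝ) (hb₂ : 0 < b₂) (hbb : b₂ < b₁) (hb₁ : b₁ < 1) :
    ∃ k : ℕ, 0 < Real.sin (π * (s - k * b₁)) * Real.sin (π * (t - k * b₂)) := by
  by_contra hcon
  push_neg at hcon
  have hπ := Real.pi_pos
  have hE₁ : Complex.exp ((-(π * (b₁ - b₂)) : ℝ) * Complex.I) ≠ 1 :=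
    exp_ne_one (by nlinarith) (by nlinarith)
  have hE₂ : Complex.exp ((-(π * (b₁ + b₂)) : ℝ) * Complex.I) ≠ 1 :=
    exp_ne_one (by nlinarith) (by nlinarith)
  set E₁ := ‖Complex.exp ((-(π * (b₁ - b₂)) : ℝ) * Complex.I) - 1‖ with hE₁def
  set E₂ := ‖Complex.exp ((-(π * (b₁ + b₂)) : ℝ) * Complex.I) - 1‖ with hE₂def
  set g : ℕ → ℝ := fun k => -(Real.sin (π * (s - k * b₁)) * Real.sin (π * (t - k * b₂)))
    with hgdef
  have hg0 : ∀ k, 0 ≤ g k := fun k => neg_nonneg.mpr (hcon k)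
  have hprod : ∀ A B : ℝ, -(Real.sin A * Real.sin B)
      = (Real.cos (A + B) - Real.cos (A - B)) / 2 := by
    intro A B; rw [Real.cos_add, Real.cos_sub]; ring
  have hgid : ∀ k : ℕ, g k =
      (Real.cos (π * (s + t) + k * (-(π * (b₁ + b₂))))
        - Real.cos (π * (s - t) + k * (-(π * (b₁ - b₂))))) / 2 := by
    intro k
    rw [show π * (s + t) + k * (-(π * (b₁ + b₂)))
        = (π * (s - k * b₁)) + (π * (t - k * b₂)) by ring,
      show π * (s - t) + k * (-(π * (b₁ - b₂)))
        = (π * (s - k * b₁)) - (π * (t - k * b₂)) by ring]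
    exact hprod _ _
  have hsum : ∀ N : ℕ, ∑ k ∈ Finset.range N, g k ≤ (2 / E₂ + 2 / E₁) / 2 := by
    intro N
    have e2 := cos_sum_bound (π * (s + t)) (-(π * (b₁ + b₂))) hE₂ N
    have e1 := cos_sum_bound (π * (s - t)) (-(π * (b₁ - b₂))) hE₁ N
    rw [abs_le] at e1 e2
    have : ∑ k ∈ Finset.range N, g k =
        ((∑ k ∈ Finset.range N, Real.cos (π * (s + t) + k * (-(π * (b₁ + b₂)))))
        - (∑ k ∈ Finset.range N, Real.cos (π * (s - t) + k * (-(π * (b₁ - b₂)))))) / 2 := by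
      rw [← Finset.sum_sub_distrib, Finset.sum_div]
      exact Finset.sum_congr rfl fun k _ => hgid k
    rw [this]
    have h1 := e1.1
    have h2 := e2.2
    linarith
  have hsummable : Summable g := summable_of_sum_range_le hg0 hsum
  have htend : Tendsto g atTop (nhds 0) := hsummable.tendsto_atTop_zero
  have hd1 : 0 < |b₁ - round b₁| :=
    abs_pos.mpr (sub_ne_zero.mpr (not_int_of_mem_Ioo (hb₂.trans hbb) hb₁ _))
  have hd2 : 0 < |b₂ - round b₂| :=
    abs_pos.mpr (sub_ne_zero.mpr (not_int_of_mem_Ioo hb₂ (hbb.trans hb₁) _))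
  have hM : 0 < max |2*b₁ - round (2*b₁)| |2*b₂ - round (2*b₂)| := by
    by_contra hM'
    push_neg at hM'
    have h1 : |2*b₁ - round (2*b₁)| = 0 :=
      le_antisymm (le_trans (le_max_left _ _) hM') (abs_nonneg _)
    have h2 : |2*b₂ - round (2*b₂)| = 0 :=
      le_antisymm (le_trans (le_max_right _ _) hM') (abs_nonneg _)
    have e1 : 2*b₁ = (round (2*b₁) : ℝ) := by have := abs_eq_zero.mp h1; linarith
    have e2 : 2*b₂ = (round (2*b₂) : ℝ) := by have := abs_eq_zero.mp h2; linarith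
    have i1 : (0:ℤ) < round (2*b₂) := by
      have : (0:ℝ) < (round (2*b₂) : ℝ) := by rw [← e2]; linarith
      exact_mod_cast this
    have i2 : round (2*b₂) < round (2*b₁) := by
      have : ((round (2*b₂)) : ℝ) < (round (2*b₁) : ℝ) := by rw [← e1, ← e2]; linarith
      exact_mod_cast this
    have i3 : round (2*b₁) < 2 := by
      have : ((round (2*b₁)) : ℝ) < 2 := by rw [← e1]; linarith
      exact_mod_cast this
    omega
  set ε := (min (min |b₁ - round b₁| |b₂ - round b₂|)
      (max |2*b₁ - round (2*b₁)| |2*b₂ - round (2*b₂)|)) / 2 with hεdef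
  have hε : 0 < ε := by
    apply div_pos _ (by norm_num)
    exact lt_min (lt_min hd1 hd2) hM
  have hε1 : 2*ε ≤ |b₁ - round b₁| := by
    have : 2*ε = min (min |b₁ - round b₁| |b₂ - round b₂|)
        (max |2*b₁ - round (2*b₁)| |2*b₂ - round (2*b₂)|) := by rw [hεdef]; ring
    rw [this]
    exact le_trans (min_le_left _ _) (min_le_left _ _)
  have hε2 : 2*ε ≤ |b₂ - round b₂| := by
    have : 2*ε = min (min |b₁ - round b₁| |b₂ - round b₂|)
        (max |2*b₁ - round (2*b₁)| |2*b₂ - round (2*b₂)|) := by rw [hεdef]; ring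
    rw [this]
    exact le_trans (min_le_left _ _) (min_le_right _ _)
  have hεM : 2*ε ≤ max |2*b₁ - round (2*b₁)| |2*b₂ - round (2*b₂)| := by
    have : 2*ε = min (min |b₁ - round b₁| |b₂ - round b₂|)
        (max |2*b₁ - round (2*b₁)| |2*b₂ - round (2*b₂)|) := by rw [hεdef]; ring
    rw [this]
    exact min_le_right _ _
  obtain ⟨N, hN⟩ : ∃ N : ℕ, ∀ k ≥ N, g k < 4*ε^2 := by
    have h4 : (0:ℝ) < 4*ε^2 := by positivity
    have hev := htend.eventually (gt_mem_nhds h4)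
    exact eventually_atTop.mp hev
  set A : ℕ → Prop := fun k => |s - k*b₁ - round (s - k*b₁)| < ε with hAdef
  set B : ℕ → Prop := fun k => |t - k*b₂ - round (t - k*b₂)| < ε with hBdef
  have hAB : ∀ k ≥ N, A k ∨ B k := by
    intro k hk
    by_contra hc2
    push_neg at hc2
    obtain ⟨hu, hv⟩ := hc2
    simp only [hAdef, hBdef, not_lt] at hu hv
    have l1 := sin_lower (s - k*b₁)
    have l2 := sin_lower (t - k*b₂)
    have habs : g k = |Real.sin (π*(s - k*b₁))| * |Real.sin (π*(t - k*b₂))| := by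
      simp only [hgdef]
      rw [← abs_mul, abs_of_nonpos (hcon k)]
    have hgk := hN k hk
    rw [habs] at hgk
    nlinarith [abs_nonneg (s - k*b₁ - round (s - k*b₁)),
      abs_nonneg (t - k*b₂ - round (t - k*b₂)),
      abs_nonneg (Real.sin (π*(s - k*b₁))), abs_nonneg (Real.sin (π*(t - k*b₂)))]
  have hgap : ∀ (u b' : ℝ) (j k : ℕ),
      |u - k*b' - round (u - k*b')| < ε → |u - (k+j : ℕ)*b' - round (u - (k+j : ℕ)*b')| < ε →
      |(j:ℝ)*b' - round ((j:ℝ)*b')| < 2*ε := by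
    intro u b' j k h1 h2
    have key_s9 := dZ_sub_le (u - k*b') (u - (k+j : ℕ)*b')
    have harg : (u - (k:ℝ)*b') - (u - ((k+j : ℕ):ℝ)*b') = (j:ℝ)*b' := by push_cast; ring
    rw [harg] at key_s9
    linarith
  have hAA : ∀ k, A k → A (k+1) → False := by
    intro k h1 h2
    have := hgap s b₁ 1 k h1 h2
    rw [show ((1:ℕ):ℝ)*b₁ = b₁ by norm_num] at this
    linarith
  have hBB : ∀ k, B k → B (k+1) → False := by
    intro k h1 h2
    have := hgap t b₂ 1 k h1 h2
    rw [show ((1:ℕ):ℝ)*b₂ = b₂ by norm_num] at this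
    linarith
  rcases hAB N le_rfl with h0 | h0
  · have h1 : B (N+1) := (hAB (N+1) (by omega)).resolve_left (fun h' => (hAA N h0 h').elim)
    have h2 : A (N+2) := (hAB (N+2) (by omega)).resolve_right (fun h' => (hBB (N+1) h1 h').elim)
    have h3 : B (N+3) := (hAB (N+3) (by omega)).resolve_left (fun h' => (hAA (N+2) h2 h').elim)
    have e1 := hgap s b₁ 2 N h0 h2
    have e2 := hgap t b₂ 2 (N+1) h1 h3
    rw [show ((2:ℕ):ℝ)*b₁ = 2*b₁ by norm_num] at e1
    rw [show ((2:ℕ):ℝ)*b₂ = 2*b₂ by norm_num] at e2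
    have := max_lt e1 e2
    linarith
  · have h1 : A (N+1) := (hAB (N+1) (by omega)).resolve_right (fun h' => (hBB N h0 h').elim)
    have h2 : B (N+2) := (hAB (N+2) (by omega)).resolve_left (fun h' => (hAA (N+1) h1 h').elim)
    have h3 : A (N+3) := (hAB (N+3) (by omega)).resolve_right (fun h' => (hBB (N+2) h2 h').elim)
    have e1 := hgap s b₁ 2 (N+1) h1 h3
    have e2 := hgap t b₂ 2 N h0 h2
    rw [show ((2:ℕ):ℝ)*b₁ = 2*b₁ by norm_num] at e1
    rw [show ((2:ℕ):ℝ)*b₂ = 2*b₂ by norm_num] at e2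
    have := max_lt e1 e2
    linarith

lemma rot_re_mul_im (θ : ℝ) (f : ℂ) (k : ℕ) :
    (Complex.exp ((k : ℝ) * θ * Complex.I) * f).re *
      (Complex.exp ((k : ℝ) * θ * Complex.I) * f).im =
    (‖f^2‖ / 2) *
      Real.sin (π * (Complex.arg (f^2) / π - k * (2 - 2*θ/π))) := by
  have hπ := Real.pi_pos
  set z := Complex.exp ((k : ℝ) * θ * Complex.I) * f with hzdef
  have hsq : z^2 = ((‖f^2‖ : ℝ) : ℂ) *
      Complex.exp (((2*k*θ + Complex.arg (f^2) : ℝ)) * Complex.I) := by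
    rw [hzdef, mul_pow, ← Complex.exp_nat_mul]
    conv_lhs => rw [← Complex.norm_mul_exp_arg_mul_I (f^2)]
    rw [mul_left_comm, ← Complex.exp_add]
    congr 2
    push_cast
    ring
  have him : (z^2).im = ‖f^2‖ * Real.sin (2*k*θ + Complex.arg (f^2)) := by
    rw [hsq, Complex.mul_im, Complex.ofReal_re, Complex.ofReal_im,
      Complex.exp_ofReal_mul_I_im]
    ring
  have him2 : (z^2).im = 2 * (z.re * z.im) := by
    rw [pow_two, Complex.mul_im]; ring
  have hsin : Real.sin (2*(k:ℝ)*θ + Complex.arg (f^2)) =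
      Real.sin (π * (Complex.arg (f^2) / π - k * (2 - 2*θ/π))) := by
    have harg : π * (Complex.arg (f^2) / π - k * (2 - 2*θ/π)) + ((2*k : ℤ) : ℝ) * π
        = 2*(k:ℝ)*θ + Complex.arg (f^2) := by
      push_cast
      field_simp
      ring
    rw [← harg, Real.sin_add_int_mul_pi]
    have hev : ((-1:ℝ)) ^ ((2*(k:ℤ))) = 1 := Even.neg_one_zpow ⟨(k:ℤ), by ring⟩
    rw [hev, one_mul]
  have : z.re * z.im = (z^2).im / 2 := by rw [him2]; ring
  rw [this, him, ← hsin]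
  ring


/-- Overtaking Lemma 4.3, second case: for `π/2 < θ₁ < θ₂ < π` and nonzero vectors
`f₁, f₂` off the coordinate axes, some simultaneous rotation `R(kθ₁)f₁`, `R(kθ₂)f₂`
puts them in the same open quadrant or in diametrically opposite ones. -/
theorem stmt9 (θ₁ θ₂ : ℝ) (h1 : π / 2 < θ₁) (h2 : θ₁ < θ₂) (h3 : θ₂ < π)
    (f₁ f₂ : ℂ) (hf₁ : f₁.re ≠ 0 ∧ f₁.im ≠ 0) (hf₂ : f₂.re ≠ 0 ∧ f₂.im ≠ 0) :
    ∃ k : ℕ, SameOrOppositeQuadrant (Complex.exp ((k : ℝ) * θ₁ * Complex.I) * f₁)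
      (Complex.exp ((k : ℝ) * θ₂ * Complex.I) * f₂) := by
  have hπ := Real.pi_pos
  have hb₂ : 0 < 2 - 2*θ₂/π := by
    have : 2*θ₂/π < 2 := by rw [div_lt_iff₀ hπ]; linarith
    linarith
  have hbb : 2 - 2*θ₂/π < 2 - 2*θ₁/π := by
    have : 2*θ₁/π < 2*θ₂/π := by rw [div_lt_div_iff₀ hπ hπ]; nlinarith
    linarith
  have hb₁ : 2 - 2*θ₁/π < 1 := by
    have : 1 < 2*θ₁/π := by rw [lt_div_iff₀ hπ]; linarith
    linarith
  obtain ⟨k, hk⟩ := key_s9 (2 - 2*θ₁/π) (2 - 2*θ₂/π)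
    (Complex.arg (f₁^2) / π) (Complex.arg (f₂^2) / π) hb₂ hbb hb₁
  refine ⟨k, ?_⟩
  have habs1 : 0 < ‖f₁^2‖ := by
    apply norm_pos_iff.mpr
    exact pow_ne_zero 2 (fun h => hf₁.1 (by rw [h]; simp))
  have habs2 : 0 < ‖f₂^2‖ := by
    apply norm_pos_iff.mpr
    exact pow_ne_zero 2 (fun h => hf₂.1 (by rw [h]; simp))
  refine mul_pos_iff.mp ?_
  rw [mul_mul_mul_comm, rot_re_mul_im θ₁ f₁ k, rot_re_mul_im θ₂ f₂ k]
  nlinarith [mul_pos (mul_pos (div_pos habs1 two_pos) (div_pos habs2 two_pos)) hk]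
end

section
/- Let 0 < θ₁ < π/2 < θ₂ < π with θ₁ ≠ π - θ₂. Then for any two nonzero vectors f₁, f₂ ∈ ℝ² not lying on the coordinate axes, there exists k ∈ ℕ such that R(kθ₁)f₁ and R(kθ₂)f₂ lie in the same open quadrant or in diametrically opposite open quadrants. -/
open Real

lemma geomBound (γ c : ℝ) (h : Complex.exp (↑γ * Complex.I) ≠ 1) (N : ℕ) :
    |∑ k ∈ Finset.range N, Real.cos (c + ↑k * γ)| ≤
      2 / ‖Complex.exp (↑γ * Complex.I) - 1‖ := by
  set z := Complex.exp (↑γ * Complex.I) with hz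
  have key : ∑ k ∈ Finset.range N, Real.cos (c + ↑k * γ)
      = (Complex.exp (↑c * Complex.I) * ∑ k ∈ Finset.range N, z ^ k).re := by
    rw [Finset.mul_sum, Complex.re_sum]
    refine Finset.sum_congr rfl fun k _ => ?_
    rw [hz, ← Complex.exp_nat_mul, ← Complex.exp_add,
      ← Complex.exp_ofReal_mul_I_re (c + k * γ)]
    congr 2
    push_cast
    ring
  rw [key]
  calc |(Complex.exp (↑c * Complex.I) * ∑ k ∈ Finset.range N, z ^ k).re|
      ≤ ‖Complex.exp (↑c * Complex.I) * ∑ k ∈ Finset.range N, z ^ k‖ :=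
        Complex.abs_re_le_norm _
    _ = ‖∑ k ∈ Finset.range N, z ^ k‖ := by
        rw [norm_mul, Complex.norm_exp_ofReal_mul_I, one_mul]
    _ = ‖z ^ N - 1‖ / ‖z - 1‖ := by
        rw [geom_sum_eq h, norm_div]
    _ ≤ 2 / ‖z - 1‖ := by
        gcongr
        calc ‖z ^ N - 1‖ ≤ ‖z ^ N‖ + ‖(1 : ℂ)‖ := by
              simpa using norm_sub_le (z ^ N) 1
          _ ≤ 2 := by
              rw [norm_pow, hz, Complex.norm_exp_ofReal_mul_I, one_pow, norm_one]
              norm_num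

lemma expNeOne (γ : ℝ) (m : ℤ) (hlo : (m : ℝ) * (2 * π) < γ) (hhi : γ < ((m : ℝ) + 1) * (2 * π)) :
    Complex.exp (↑γ * Complex.I) ≠ 1 := by
  intro hc
  obtain ⟨n, hn⟩ := Complex.exp_eq_one_iff.mp hc
  rw [show ((n : ℂ)) * (2 * ↑π * Complex.I) = ↑((n : ℝ) * (2 * π)) * Complex.I by
    push_cast; ring] at hn
  have hγ : γ = (n : ℝ) * (2 * π) := by
    exact_mod_cast mul_right_cancel₀ Complex.I_ne_zero hn
  rw [hγ] at hlo hhi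
  have h2π : 0 < 2 * π := by positivity
  have hmn : m < n := by
    by_contra h
    push_neg at h
    have : (n : ℝ) ≤ (m : ℝ) := by exact_mod_cast h
    nlinarith
  have hnm : n < m + 1 := by
    by_contra h
    push_neg at h
    have : ((m : ℝ) + 1) ≤ (n : ℝ) := by exact_mod_cast h
    nlinarith
  omega

lemma rot_im (μ : ℝ) (w : ℂ) (hw : w ≠ 0) :
    (Complex.exp (↑μ * Complex.I) * w).im = ‖w‖ * Real.sin (w.arg + μ) := by
  rw [Complex.mul_im, Complex.exp_ofReal_mul_I_re, Complex.exp_ofReal_mul_I_im, Real.sin_add]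
  have habs : ‖w‖ ≠ 0 := by simpa using hw
  have h1 : w.re = ‖w‖ * Real.cos w.arg := by
    rw [Complex.cos_arg hw]; field_simp
  have h2 : w.im = ‖w‖ * Real.sin w.arg := by
    rw [Complex.sin_arg]; field_simp
  rw [h1, h2]; ring

lemma sooq (z w : ℂ)
    (h : 0 < (z.re * z.im) * (w.re * w.im)) :
    (0 < z.re * w.re ∧ 0 < z.im * w.im) ∨ (z.re * w.re < 0 ∧ z.im * w.im < 0) := by
  have hrw : (z.re * z.im) * (w.re * w.im) = (z.re * w.re) * (z.im * w.im) := by ring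
  rw [hrw] at h
  rcases mul_pos_iff.mp h with ⟨ha, hb⟩ | ⟨ha, hb⟩
  · exact Or.inl ⟨ha, hb⟩
  · exact Or.inr ⟨ha, hb⟩

lemma quad_im (μ : ℝ) (f : ℂ) (hf : f ≠ 0) :
    (Complex.exp (↑μ * Complex.I) * f).re * (Complex.exp (↑μ * Complex.I) * f).im
      = ‖f ^ 2‖ * Real.sin ((f ^ 2).arg + 2 * μ) / 2 := by
  have hsq : (Complex.exp (↑μ * Complex.I) * f) ^ 2
      = Complex.exp (↑(2 * μ) * Complex.I) * f ^ 2 := by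
    rw [mul_pow, sq (Complex.exp _), ← Complex.exp_add]
    congr 2
    push_cast
    ring
  have h2 : ((Complex.exp (↑μ * Complex.I) * f) ^ 2).im
      = 2 * ((Complex.exp (↑μ * Complex.I) * f).re * (Complex.exp (↑μ * Complex.I) * f).im) := by
    rw [sq, Complex.mul_im]; ring
  rw [hsq, rot_im (2 * μ) (f ^ 2) (pow_ne_zero 2 hf)] at h2
  linarith

lemma keyLemma (θ₁ θ₂ : ℝ) (h1 : 0 < θ₁) (h2 : θ₁ < π / 2) (h3 : π / 2 < θ₂)
    (h4 : θ₂ < π) (h5 : θ₁ ≠ π - θ₂) (φ ψ : ℝ) :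
    ∃ k : ℕ, 0 < Real.sin (φ + ↑k * (2 * θ₁)) * Real.sin (ψ + ↑k * (2 * θ₂)) := by
  by_contra hcon
  push_neg at hcon
  have pi_pos := Real.pi_pos
  have hq : θ₁ + θ₂ ≠ π := fun h => h5 (by linarith)
  -- the five frequencies
  have hp : Complex.exp (↑(2 * θ₁ - 2 * θ₂) * Complex.I) ≠ 1 := by
    refine expNeOne _ (-1) (by push_cast; nlinarith) (by push_cast; nlinarith)
  have hqe : Complex.exp (↑(2 * θ₁ + 2 * θ₂) * Complex.I) ≠ 1 := by
    rcases lt_or_gt_of_ne hq with h | h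
    · exact expNeOne _ 0 (by push_cast; nlinarith) (by push_cast; nlinarith)
    · exact expNeOne _ 1 (by push_cast; nlinarith) (by push_cast; nlinarith)
  have h2qe : Complex.exp (↑(2 * (2 * θ₁ + 2 * θ₂)) * Complex.I) ≠ 1 := by
    rcases lt_or_gt_of_ne hq with h | h
    · exact expNeOne _ 1 (by push_cast; nlinarith) (by push_cast; nlinarith)
    · exact expNeOne _ 2 (by push_cast; nlinarith) (by push_cast; nlinarith)
  have h4a : Complex.exp (↑(4 * θ₁) * Complex.I) ≠ 1 :=
    expNeOne _ 0 (by push_cast; nlinarith) (by push_cast; nlinarith)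
  have h4b : Complex.exp (↑(4 * θ₂) * Complex.I) ≠ 1 :=
    expNeOne _ 1 (by push_cast; nlinarith) (by push_cast; nlinarith)
  -- bounds
  set Bp := 2 / ‖Complex.exp (↑(2 * θ₁ - 2 * θ₂) * Complex.I) - 1‖ with hBp
  set Bq := 2 / ‖Complex.exp (↑(2 * θ₁ + 2 * θ₂) * Complex.I) - 1‖ with hBq
  set B2q := 2 / ‖Complex.exp (↑(2 * (2 * θ₁ + 2 * θ₂)) * Complex.I) - 1‖ with hB2q
  set Ba := 2 / ‖Complex.exp (↑(4 * θ₁) * Complex.I) - 1‖ with hBa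
  set Bb := 2 / ‖Complex.exp (↑(4 * θ₂) * Complex.I) - 1‖ with hBb
  obtain ⟨N, hN⟩ := exists_nat_gt (4 * (Bp + Bq) + B2q + 2 * Ba + 2 * Bb + 1)
  -- abbreviations
  set F : ℕ → ℝ := fun k => Real.sin (φ + ↑k * (2 * θ₁)) * Real.sin (ψ + ↑k * (2 * θ₂)) with hF
  set A : ℕ → ℝ := fun k => (φ - ψ) + ↑k * (2 * θ₁ - 2 * θ₂) with hA
  set B : ℕ → ℝ := fun k => (φ + ψ) + ↑k * (2 * θ₁ + 2 * θ₂) with hB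
  have hFA : ∀ k : ℕ, F k = (Real.cos (A k) - Real.cos (B k)) / 2 := by
    intro k
    have c1 : Real.cos (A k)
        = Real.cos (φ + ↑k * (2 * θ₁)) * Real.cos (ψ + ↑k * (2 * θ₂))
          + Real.sin (φ + ↑k * (2 * θ₁)) * Real.sin (ψ + ↑k * (2 * θ₂)) := by
      rw [show A k = (φ + ↑k * (2 * θ₁)) - (ψ + ↑k * (2 * θ₂)) by simp only [hA]; ring]
      exact Real.cos_sub _ _
    have c2 : Real.cos (B k)
        = Real.cos (φ + ↑k * (2 * θ₁)) * Real.cos (ψ + ↑k * (2 * θ₂))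
          - Real.sin (φ + ↑k * (2 * θ₁)) * Real.sin (ψ + ↑k * (2 * θ₂)) := by
      rw [show B k = (φ + ↑k * (2 * θ₁)) + (ψ + ↑k * (2 * θ₂)) by simp only [hB]; ring]
      exact Real.cos_add _ _
    simp only [hF]
    rw [c1, c2]
    ring
  -- pointwise lower bound for F k ^ 2
  have hG : ∀ k : ℕ,
      1 / 8 + Real.cos (2 * (φ + ψ) + ↑k * (2 * (2 * θ₁ + 2 * θ₂))) / 8
        - Real.cos (2 * φ + ↑k * (4 * θ₁)) / 4
        - Real.cos (2 * ψ + ↑k * (4 * θ₂)) / 4 ≤ F k ^ 2 := by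
    intro k
    have e1 : Real.cos (2 * (φ + ψ) + ↑k * (2 * (2 * θ₁ + 2 * θ₂)))
        = 2 * Real.cos (B k) ^ 2 - 1 := by
      rw [show 2 * (φ + ψ) + ↑k * (2 * (2 * θ₁ + 2 * θ₂)) = 2 * (B k) by
        simp only [hB]; ring, Real.cos_two_mul]
    have e2 : Real.cos (2 * φ + ↑k * (4 * θ₁)) + Real.cos (2 * ψ + ↑k * (4 * θ₂))
        = 2 * Real.cos (B k) * Real.cos (A k) := by
      rw [Real.cos_add_cos,
        show (2 * φ + ↑k * (4 * θ₁) + (2 * ψ + ↑k * (4 * θ₂))) / 2 = B k by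
          simp only [hB]; ring,
        show (2 * φ + ↑k * (4 * θ₁) - (2 * ψ + ↑k * (4 * θ₂))) / 2 = A k by
          simp only [hA]; ring]
    rw [hFA k]
    nlinarith [sq_nonneg (Real.cos (A k)), e1, e2]
  -- sum bounds
  have gp := geomBound (2 * θ₁ - 2 * θ₂) (φ - ψ) hp N
  have gq := geomBound (2 * θ₁ + 2 * θ₂) (φ + ψ) hqe N
  have g2q := geomBound (2 * (2 * θ₁ + 2 * θ₂)) (2 * (φ + ψ)) h2qe N
  have ga := geomBound (4 * θ₁) (2 * φ) h4a N
  have gb := geomBound (4 * θ₂) (2 * ψ) h4b N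
  rw [← hBp] at gp
  rw [← hBq] at gq
  rw [← hB2q] at g2q
  rw [← hBa] at ga
  rw [← hBb] at gb
  -- lower bound for sum of F
  have hSlow : -(Bp + Bq) / 2 ≤ ∑ k ∈ Finset.range N, F k := by
    have : ∑ k ∈ Finset.range N, F k
        = ((∑ k ∈ Finset.range N, Real.cos ((φ - ψ) + ↑k * (2 * θ₁ - 2 * θ₂)))
          - ∑ k ∈ Finset.range N, Real.cos ((φ + ψ) + ↑k * (2 * θ₁ + 2 * θ₂))) / 2 := by
      rw [← Finset.sum_sub_distrib, Finset.sum_div]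
      exact Finset.sum_congr rfl fun k _ => hFA k
    rw [this]
    have h1 := (abs_le.mp gp).1
    have h2 := (abs_le.mp gq).2
    linarith
  -- lower bound for sum of F^2
  have hSsq : (N : ℝ) / 8 - B2q / 8 - Ba / 4 - Bb / 4 ≤ ∑ k ∈ Finset.range N, F k ^ 2 := by
    have hle : ∑ k ∈ Finset.range N,
        (1 / 8 + Real.cos (2 * (φ + ψ) + ↑k * (2 * (2 * θ₁ + 2 * θ₂))) / 8
          - Real.cos (2 * φ + ↑k * (4 * θ₁)) / 4
          - Real.cos (2 * ψ + ↑k * (4 * θ₂)) / 4)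
        ≤ ∑ k ∈ Finset.range N, F k ^ 2 :=
      Finset.sum_le_sum fun k _ => hG k
    have hsplitAll : ∀ M : ℕ, ∑ k ∈ Finset.range M,
        (1 / 8 + Real.cos (2 * (φ + ψ) + ↑k * (2 * (2 * θ₁ + 2 * θ₂))) / 8
          - Real.cos (2 * φ + ↑k * (4 * θ₁)) / 4
          - Real.cos (2 * ψ + ↑k * (4 * θ₂)) / 4)
        = (M : ℝ) / 8
          + (∑ k ∈ Finset.range M, Real.cos (2 * (φ + ψ) + ↑k * (2 * (2 * θ₁ + 2 * θ₂)))) / 8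
          - (∑ k ∈ Finset.range M, Real.cos (2 * φ + ↑k * (4 * θ₁))) / 4
          - (∑ k ∈ Finset.range M, Real.cos (2 * ψ + ↑k * (4 * θ₂))) / 4 := by
      intro M
      induction M with
      | zero => simp
      | succ n ih =>
        rw [Finset.sum_range_succ, Finset.sum_range_succ, Finset.sum_range_succ,
          Finset.sum_range_succ, ih]
        push_cast
        ring
    have hsplit := hsplitAll N
    have h1 := (abs_le.mp g2q).1
    have h2 := (abs_le.mp ga).2
    have h3 := (abs_le.mp gb).2
    linarith
  -- sum of F bounded above by minus sum of squares
  have hSup : ∑ k ∈ Finset.range N, F k ≤ -∑ k ∈ Finset.range N, F k ^ 2 := by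
    rw [← Finset.sum_neg_distrib]
    refine Finset.sum_le_sum fun k _ => ?_
    have hk0 : F k ≤ 0 := hcon k
    have hk1 : -1 ≤ F k := by
      have habs : |F k| ≤ 1 := by
        rw [hF]
        simp only
        rw [abs_mul]
        exact mul_le_one₀ (Real.abs_sin_le_one _) (abs_nonneg _) (Real.abs_sin_le_one _)
      linarith [(abs_le.mp habs).1]
    nlinarith [mul_nonneg (neg_nonneg.mpr hk0) (by linarith : (0:ℝ) ≤ F k + 1)]
  linarith

/-- Lemma 4.5: for `0 < θ₁ < π/2 < θ₂ < π` with `θ₁ ≠ π - θ₂`, and nonzero vectors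
`f₁, f₂` off the coordinate axes, some simultaneous rotation `R(kθ₁)f₁`, `R(kθ₂)f₂`
puts them in the same open quadrant or in diametrically opposite ones. -/
theorem stmt10 (θ₁ θ₂ : ℝ) (h1 : 0 < θ₁) (h2 : θ₁ < π / 2) (h3 : π / 2 < θ₂)
    (h4 : θ₂ < π) (h5 : θ₁ ≠ π - θ₂)
    (f₁ f₂ : ℂ) (hf₁ : f₁.re ≠ 0 ∧ f₁.im ≠ 0) (hf₂ : f₂.re ≠ 0 ∧ f₂.im ≠ 0) :
    ∃ k : ℕ, SameOrOppositeQuadrant (Complex.exp ((k : ℝ) * θ₁ * Complex.I) * f₁)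
      (Complex.exp ((k : ℝ) * θ₂ * Complex.I) * f₂) := by
  have hf1ne : f₁ ≠ 0 := fun h => hf₁.1 (by simp [h])
  have hf2ne : f₂ ≠ 0 := fun h => hf₂.1 (by simp [h])
  obtain ⟨k, hk⟩ := keyLemma θ₁ θ₂ h1 h2 h3 h4 h5 ((f₁ ^ 2).arg) ((f₂ ^ 2).arg)
  refine ⟨k, ?_⟩
  have hc1 : ((k : ℝ) : ℂ) * (θ₁ : ℂ) * Complex.I = ↑((k : ℝ) * θ₁) * Complex.I := by
    push_cast; ring
  have hc2 : ((k : ℝ) : ℂ) * (θ₂ : ℂ) * Complex.I = ↑((k : ℝ) * θ₂) * Complex.I := by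
    push_cast; ring
  rw [hc1, hc2]
  apply sooq
  have e1 := quad_im ((k : ℝ) * θ₁) f₁ hf1ne
  have e2 := quad_im ((k : ℝ) * θ₂) f₂ hf2ne
  rw [e1, e2]
  have hr1 : 0 < ‖f₁ ^ 2‖ := by
    exact norm_pos_iff.mpr (pow_ne_zero 2 hf1ne)
  have hr2 : 0 < ‖f₂ ^ 2‖ := by
    exact norm_pos_iff.mpr (pow_ne_zero 2 hf2ne)
  have hs1 : Real.sin ((f₁ ^ 2).arg + 2 * ((k : ℝ) * θ₁))
      = Real.sin ((f₁ ^ 2).arg + (k : ℝ) * (2 * θ₁)) := by ring_nf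
  have hs2 : Real.sin ((f₂ ^ 2).arg + 2 * ((k : ℝ) * θ₂))
      = Real.sin ((f₂ ^ 2).arg + (k : ℝ) * (2 * θ₂)) := by ring_nf
  rw [hs1, hs2]
  have := mul_pos (mul_pos hr1 hr2) hk
  nlinarith [this]
end
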